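/- Let $(x_k)$ be an infinite real sequence and $\varepsilon > 0$. Suppose there exists $n_0$ such that for every $n \ge n_0$ there is a positive integer $m \le n\varepsilon$ with $D\{x_k : n < k \le n+m\} \le \varepsilon$. Then $\limsup_{N \to \infty} D\{x_k : 1 \le k \le N\} \le 2\varepsilon$. -/

import Mathlib

open scoped Classical in
/-- Discrepancy of the finite sequence `(y k)` for `k` in the index set `s`. -/
noncomputable def disc (s : Finset ℕ) (y : ℕ → ℝ) : ℝ :=
  ⨆ p : {p : ℝ × ℝ // 0 ≤ p.1 ∧ p.1 < p.2 ∧ p.2 ≤ 1},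
    |((s.filter fun k => Int.fract (y k) ∈ Set.Ico p.1.1 p.1.2).card : ℝ) / s.card
      - (p.1.2 - p.1.1)|

open scoped Classical

/-- The counting function underlying `disc`. -/
noncomputable def cnt (s : Finset ℕ) (y : ℕ → ℝ) (u v : ℝ) : ℕ :=
  (s.filter fun k => Int.fract (y k) ∈ Set.Ico u v).card

lemma disc_bddAbove (s : Finset ℕ) (y : ℕ → ℝ) :
    BddAbove (Set.range fun p : {p : ℝ × ℝ // 0 ≤ p.1 ∧ p.1 < p.2 ∧ p.2 ≤ 1} =>
      |((s.filter fun k => Int.fract (y k) ∈ Set.Ico p.1.1 p.1.2).card : ℝ) / s.card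
        - (p.1.2 - p.1.1)|) := by
  refine ⟨1, ?_⟩
  rintro r ⟨⟨⟨u, v⟩, h0, huv, h1⟩, rfl⟩
  simp only
  have hle : ((s.filter fun k => Int.fract (y k) ∈ Set.Ico u v).card : ℝ) ≤ s.card := by
    exact_mod_cast Finset.card_filter_le _ _
  have hnn : (0 : ℝ) ≤ ((s.filter fun k => Int.fract (y k) ∈ Set.Ico u v).card : ℝ) :=
    Nat.cast_nonneg _
  have hq1 : ((s.filter fun k => Int.fract (y k) ∈ Set.Ico u v).card : ℝ) / s.card ≤ 1 :=
    div_le_one_of_le₀ hle (Nat.cast_nonneg _)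
  have hq0 : (0 : ℝ) ≤ ((s.filter fun k => Int.fract (y k) ∈ Set.Ico u v).card : ℝ) / s.card :=
    div_nonneg hnn (Nat.cast_nonneg _)
  rw [abs_sub_le_iff]
  constructor <;> nlinarith

lemma le_disc (s : Finset ℕ) (y : ℕ → ℝ) {u v : ℝ} (h0 : 0 ≤ u) (huv : u < v) (h1 : v ≤ 1) :
    |((cnt s y u v : ℝ)) / s.card - (v - u)| ≤ disc s y :=
  le_ciSup (disc_bddAbove s y) ⟨(u, v), h0, huv, h1⟩

lemma abs_cnt_sub_le (s : Finset ℕ) (y : ℕ → ℝ) {u v : ℝ} (h0 : 0 ≤ u) (huv : u < v)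
    (h1 : v ≤ 1) : |((cnt s y u v : ℝ)) - s.card * (v - u)| ≤ s.card := by
  have hle : ((cnt s y u v : ℝ)) ≤ s.card := by
    exact_mod_cast Finset.card_filter_le _ _
  have hnn : (0 : ℝ) ≤ (cnt s y u v : ℝ) := Nat.cast_nonneg _
  have hc : (0 : ℝ) ≤ (s.card : ℝ) := Nat.cast_nonneg _
  rw [abs_sub_le_iff]
  constructor <;> nlinarith

lemma cnt_split (y : ℕ → ℝ) (u v : ℝ) {b n : ℕ} (hbn : b ≤ n) :
    cnt (Finset.Ioc 0 n) y u v = cnt (Finset.Ioc 0 b) y u v + cnt (Finset.Ioc b n) y u v := by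
  unfold cnt
  rw [← Finset.card_union_of_disjoint, ← Finset.filter_union,
    Finset.Ioc_union_Ioc_eq_Ioc (Nat.zero_le b) hbn]
  exact Finset.disjoint_filter_filter (by
    simp only [Finset.disjoint_left, Finset.mem_Ioc]
    omega)

lemma Icc_one_eq_Ioc (n : ℕ) : Finset.Icc 1 n = Finset.Ioc 0 n :=
  Finset.Icc_add_one_left_eq_Ioc 0 n

/-- the key counting bound -/
lemma key_bound (x : ℕ → ℝ) (ε : ℝ) (hε : 0 < ε) (n0 : ℕ)
    (H : ∀ n ≥ n0, ∃ m : ℕ, 0 < m ∧ (m : ℝ) ≤ n * ε ∧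
        disc (Finset.Icc (n + 1) (n + m)) x ≤ ε) :
    ∀ N ≥ n0, ∀ u v : ℝ, 0 ≤ u → u < v → v ≤ 1 →
      |((cnt (Finset.Ioc 0 N) x u v : ℝ)) - N * (v - u)| ≤ n0 + 2 * ε * N := by
  -- choose block lengths
  have hm : ∀ n : ℕ, n0 ≤ n → ∃ m : ℕ, 0 < m ∧ (m : ℝ) ≤ n * ε ∧
      disc (Finset.Icc (n + 1) (n + m)) x ≤ ε := fun n hn => H n hn
  set m : ℕ → ℕ := fun n => if hn : n0 ≤ n then (hm n hn).choose else 1 with hmdef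
  have hm0 : ∀ n, n0 ≤ n → 0 < m n := by
    intro n hn; simp only [hmdef, dif_pos hn]; exact (hm n hn).choose_spec.1
  have hm1 : ∀ n, n0 ≤ n → (m n : ℝ) ≤ n * ε := by
    intro n hn; simp only [hmdef, dif_pos hn]; exact (hm n hn).choose_spec.2.1
  have hm2 : ∀ n, n0 ≤ n → disc (Finset.Icc (n + 1) (n + m n)) x ≤ ε := by
    intro n hn; simp only [hmdef, dif_pos hn]; exact (hm n hn).choose_spec.2.2
  -- the recursive block-endpoints sequence
  set f : ℕ → ℕ := fun j => Nat.rec n0 (fun _ p => p + m p) j with hfdef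
  have hfs : ∀ j, f (j + 1) = f j + m (f j) := fun j => rfl
  have hf0 : f 0 = n0 := rfl
  have hfge : ∀ j, n0 ≤ f j := by
    intro j; induction j with
    | zero => exact le_refl _
    | succ k ih => rw [hfs]; omega
  have hflt : ∀ j, f j < f (j + 1) := by
    intro j; rw [hfs]; have := hm0 _ (hfge j); omega
  have hfmono : StrictMono f := strictMono_nat_of_lt_succ hflt
  -- the block counting bound
  have hblock : ∀ n, n0 ≤ n → ∀ u v : ℝ, 0 ≤ u → u < v → v ≤ 1 →
      |((cnt (Finset.Ioc n (n + m n)) x u v : ℝ)) - (m n) * (v - u)| ≤ (m n) * ε := by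
    intro n hn u v h0 huv h1
    have hd := hm2 n hn
    have := le_disc (Finset.Icc (n + 1) (n + m n)) x h0 huv h1
    rw [Finset.Icc_add_one_left_eq_Ioc] at this
    have hcard : (Finset.Ioc n (n + m n)).card = m n := by
      rw [Nat.card_Ioc]; omega
    have hmpos : (0 : ℝ) < (m n : ℝ) := by exact_mod_cast hm0 n hn
    have h2 : |((cnt (Finset.Ioc n (n + m n)) x u v : ℝ)) / (m n) - (v - u)| ≤ ε := by
      rw [hcard] at this
      exact this.trans (by rwa [Finset.Icc_add_one_left_eq_Ioc] at hd)
    calc |((cnt (Finset.Ioc n (n + m n)) x u v : ℝ)) - (m n) * (v - u)|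
        = |((cnt (Finset.Ioc n (n + m n)) x u v : ℝ)) / (m n) - (v - u)| * (m n) := by
          rw [← abs_of_pos hmpos, ← abs_mul]; congr 1; field_simp
          rw [abs_of_pos hmpos]; ring
      _ ≤ ε * (m n) := by
          apply mul_le_mul_of_nonneg_right h2 (le_of_lt hmpos)
      _ = (m n) * ε := mul_comm _ _
  -- by induction: bound at the block endpoints
  have hend : ∀ j, ∀ u v : ℝ, 0 ≤ u → u < v → v ≤ 1 →
      |((cnt (Finset.Ioc 0 (f j)) x u v : ℝ)) - (f j) * (v - u)| ≤ n0 + ε * ((f j : ℝ) - n0) := by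
    intro j
    induction j with
    | zero =>
      intro u v h0 huv h1
      have := abs_cnt_sub_le (Finset.Ioc 0 (f 0)) x h0 huv h1
      rw [Nat.card_Ioc] at this
      simp only [hf0] at *
      simpa using this
    | succ k ih =>
      intro u v h0 huv h1
      have hsplit := cnt_split x u v (le_of_lt (hflt k))
      have hb := hblock (f k) (hfge k) u v h0 huv h1
      have hk := ih u v h0 huv h1
      have hfsucc : (f (k + 1) : ℝ) = (f k : ℝ) + (m (f k) : ℝ) := by
        rw [hfs]; push_cast; ring
      have habs : |((cnt (Finset.Ioc 0 (f (k+1))) x u v : ℝ)) - (f (k+1)) * (v - u)|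
          ≤ |((cnt (Finset.Ioc 0 (f k)) x u v : ℝ)) - (f k) * (v - u)|
            + |((cnt (Finset.Ioc (f k) (f (k+1))) x u v : ℝ)) - (m (f k)) * (v - u)| := by
        rw [hsplit, Nat.cast_add]
        have e : (cnt (Finset.Ioc 0 (f k)) x u v : ℝ)
              + (cnt (Finset.Ioc (f k) (f (k+1))) x u v : ℝ) - (f (k+1) : ℝ) * (v - u)
            = ((cnt (Finset.Ioc 0 (f k)) x u v : ℝ) - (f k) * (v - u))
              + ((cnt (Finset.Ioc (f k) (f (k+1))) x u v : ℝ) - (m (f k)) * (v - u)) := by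
          rw [hfsucc]; ring
        rw [e]
        exact abs_add_le _ _
      have heq : Finset.Ioc (f k) (f (k + 1)) = Finset.Ioc (f k) (f k + m (f k)) := by
        rw [hfs]
      rw [heq] at habs
      have hmn0 : (n0 : ℝ) ≤ (f k : ℝ) := by exact_mod_cast hfge k
      calc |((cnt (Finset.Ioc 0 (f (k+1))) x u v : ℝ)) - (f (k+1)) * (v - u)|
          ≤ (n0 + ε * ((f k : ℝ) - n0)) + (m (f k)) * ε := by
            refine habs.trans (add_le_add hk hb)
        _ ≤ n0 + ε * ((f (k+1) : ℝ) - n0) := by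
            rw [hfsucc]; nlinarith [show (0:ℝ) ≤ (m (f k) : ℝ) from Nat.cast_nonneg _]
  -- now locate N between endpoints
  intro N hN u v h0 huv h1
  have hex : ∃ k, N < f k := by
    refine ⟨N + 1, ?_⟩
    have h5 : N + 1 ≤ f (N + 1) := hfmono.le_apply
    omega
  have hjlt : N < f (Nat.find hex) := Nat.find_spec hex
  have hjne : Nat.find hex ≠ 0 := by
    intro h0'
    rw [h0', hf0] at hjlt; omega
  obtain ⟨i, hi⟩ : ∃ i, Nat.find hex = i + 1 := ⟨Nat.find hex - 1, by omega⟩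
  rw [hi] at hjlt
  have hile : f i ≤ N := by
    by_contra hc
    have := Nat.find_min hex (show i < Nat.find hex by omega)
    omega
  -- split [0,N] = [0, f i] ∪ (f i, N]
  have hsplit := cnt_split x u v (b := f i) (n := N) hile
  have htail : |((cnt (Finset.Ioc (f i) N) x u v : ℝ)) - ((N : ℝ) - f i) * (v - u)|
      ≤ (N : ℝ) - f i := by
    have := abs_cnt_sub_le (Finset.Ioc (f i) N) x h0 huv h1
    rw [Nat.card_Ioc] at this
    have hcast : ((N - f i : ℕ) : ℝ) = (N : ℝ) - f i := by
      push_cast [hile]; ring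
    rwa [hcast] at this
  have hlen : (N : ℝ) - f i ≤ ε * N := by
    have h1' : N < f i + m (f i) := by rw [← hfs]; exact hjlt
    have h2' : (m (f i) : ℝ) ≤ (f i) * ε := hm1 _ (hfge i)
    have h3' : (f i : ℝ) ≤ N := by exact_mod_cast hile
    have h4' : (N : ℝ) < (f i : ℝ) + m (f i) := by exact_mod_cast h1'
    nlinarith
  have hhead := hend i u v h0 huv h1
  have hN0 : (n0 : ℝ) ≤ N := by exact_mod_cast hN
  have hfiN : (f i : ℝ) ≤ N := by exact_mod_cast hile
  calc |((cnt (Finset.Ioc 0 N) x u v : ℝ)) - N * (v - u)|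
      ≤ |((cnt (Finset.Ioc 0 (f i)) x u v : ℝ)) - (f i) * (v - u)|
        + |((cnt (Finset.Ioc (f i) N) x u v : ℝ)) - ((N : ℝ) - f i) * (v - u)| := by
        rw [hsplit, Nat.cast_add]
        have e : (cnt (Finset.Ioc 0 (f i)) x u v : ℝ)
              + (cnt (Finset.Ioc (f i) N) x u v : ℝ) - (N : ℝ) * (v - u)
            = ((cnt (Finset.Ioc 0 (f i)) x u v : ℝ) - (f i) * (v - u))
              + ((cnt (Finset.Ioc (f i) N) x u v : ℝ) - ((N : ℝ) - f i) * (v - u)) := by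
          ring
        rw [e]
        exact abs_add_le _ _
    _ ≤ (n0 + ε * ((f i : ℝ) - n0)) + ((N : ℝ) - f i) := add_le_add hhead htail
    _ ≤ n0 + 2 * ε * N := by nlinarith

open Filter in
/-- Lemma 8 (L4): from small discrepancy on short blocks to small discrepancy
of initial segments. -/
theorem limsup_disc_le (x : ℕ → ℝ) (ε : ℝ) (hε : 0 < ε)
    (h : ∃ n0 : ℕ, ∀ n ≥ n0, ∃ m : ℕ, 0 < m ∧ (m : ℝ) ≤ n * ε ∧
          disc (Finset.Icc (n + 1) (n + m)) x ≤ ε) :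
    limsup (fun N => disc (Finset.Icc 1 N) x) atTop ≤ 2 * ε := by
  obtain ⟨n0, H⟩ := h
  -- eventually `disc (Icc 1 N) x ≤ n0 / N + 2 ε`
  have hev : ∀ᶠ N : ℕ in atTop, disc (Finset.Icc 1 N) x ≤ (n0 : ℝ) / N + 2 * ε := by
    filter_upwards [eventually_ge_atTop (max n0 1)] with N hNge
    have hN1 : 1 ≤ N := le_trans (le_max_right _ _) hNge
    have hNn0 : n0 ≤ N := le_trans (le_max_left _ _) hNge
    have hNpos : (0 : ℝ) < N := by exact_mod_cast hN1
    unfold disc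
    haveI : Nonempty {p : ℝ × ℝ // 0 ≤ p.1 ∧ p.1 < p.2 ∧ p.2 ≤ 1} :=
      ⟨⟨(0, 1), le_rfl, one_pos, le_rfl⟩⟩
    apply ciSup_le
    rintro ⟨⟨u, v⟩, h0, huv, h1⟩
    have hkey := key_bound x ε hε n0 H N hNn0 u v h0 huv h1
    have hcard : (Finset.Icc 1 N).card = N := by rw [Nat.card_Icc]; omega
    have hIcc : Finset.Icc 1 N = Finset.Ioc 0 N := Finset.Icc_add_one_left_eq_Ioc 0 N
    simp only
    have : ((Finset.Icc 1 N).filter fun k => Int.fract (x k) ∈ Set.Ico u v).card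
        = cnt (Finset.Ioc 0 N) x u v := by rw [← hIcc]; rfl
    rw [this, hcard]
    have : |((cnt (Finset.Ioc 0 N) x u v : ℝ)) / N - (v - u)|
        = |((cnt (Finset.Ioc 0 N) x u v : ℝ)) - N * (v - u)| / N := by
      conv_rhs => rw [← abs_of_pos hNpos, ← abs_div]
      congr 1
      field_simp
      rw [abs_of_pos hNpos]; ring
    rw [this]
    rw [div_le_iff₀ hNpos]
    calc |((cnt (Finset.Ioc 0 N) x u v : ℝ)) - N * (v - u)| ≤ n0 + 2 * ε * N := hkey
      _ = ((n0 : ℝ) / N + 2 * ε) * N := by field_simp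
  -- limsup comparison
  have hnonneg : ∀ N : ℕ, 0 ≤ disc (Finset.Icc 1 N) x := by
    intro N
    have := le_disc (Finset.Icc 1 N) x (u := 0) (v := 1) le_rfl one_pos le_rfl
    exact le_trans (abs_nonneg _) this
  have htend : Tendsto (fun N : ℕ => (n0 : ℝ) / N + 2 * ε) atTop (nhds (0 + 2 * ε)) :=
    (tendsto_const_div_atTop_nhds_zero_nat (n0 : ℝ)).add tendsto_const_nhds
  rw [show (0 : ℝ) + 2 * ε = 2 * ε by ring] at htend
  calc limsup (fun N => disc (Finset.Icc 1 N) x) atTop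
      ≤ limsup (fun N : ℕ => (n0 : ℝ) / N + 2 * ε) atTop := by
        exact limsup_le_limsup hev
          (isCoboundedUnder_le_of_le atTop fun N => hnonneg N)
          htend.isBoundedUnder_le
    _ = 2 * ε := htend.limsup_eq
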